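/- Landau–Toeplitz Theorem for slice regular functions (inequality part): Let f(q) = ∑_{n≥0} q^n a_n be a slice regular function on 𝔹 such that d̃₂(f(𝔹)) = 2. Then d̃₂(f(r𝔹)) ≤ 2r for every r ∈ (0,1), and |a₁| ≤ 1 (i.e. |∂_c f(0)| ≤ 1). -/

import Mathlib

noncomputable section

open Filter Metric Set

local notation "ℍ" => Quaternion ℝ

lemma re_mul_comm (a b : ℍ) : (a * b).re = (b * a).re := by
  simp only [Quaternion.re_mul]; ring

lemma imunit_mul_self {I : ℍ} (hre : I.re = 0) (hns : Quaternion.normSq I = 1) : I * I = -1 := by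
  rw [Quaternion.normSq_def'] at hns
  ext <;> simp [Quaternion.re_mul, Quaternion.imI_mul, Quaternion.imJ_mul, Quaternion.imK_mul, Quaternion.re_one, Quaternion.imI_one, Quaternion.imJ_one, Quaternion.imK_one, hre] <;> nlinarith [hns]

lemma star_imunit {I : ℍ} (hre : I.re = 0) : star I = -I := by
  ext <;> simp [hre]

lemma norm_sq_quat (x : ℍ) : ‖x‖ ^ 2 = Quaternion.normSq x := by
  rw [sq, ← Quaternion.normSq_eq_norm_mul_self]

def Tmap (e I : ℍ) : ℍ →ₗ[ℝ] ℂ where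
  toFun x := ⟨(x * star e).re, (x * star (I * e)).re⟩
  map_add' x y := by apply Complex.ext <;> simp [add_mul]
  map_smul' r x := by apply Complex.ext <;> simp [smul_mul_assoc]

lemma Tmap_apply (e I x : ℍ) : Tmap e I x = ⟨(x * star e).re, (x * star (I * e)).re⟩ := rfl

lemma Tmap_norm_le {e I : ℍ} (he : ‖e‖ = 1) (hre : I.re = 0) (hns : Quaternion.normSq I = 1) (x : ℍ) :
    ‖Tmap e I x‖ ≤ ‖x‖ := by
  have hstar : star I = -I := star_imunit hre
  have hns' : I.re ^ 2 + I.imI ^ 2 + I.imJ ^ 2 + I.imK ^ 2 = 1 := by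
    rw [← Quaternion.normSq_def', hns]
  have key : ∀ y : ℍ, y.re ^ 2 + (y * I).re ^ 2 ≤ Quaternion.normSq y := by
    intro y
    rw [Quaternion.normSq_def']
    simp only [Quaternion.re_mul, hre]
    nlinarith [sq_nonneg (y.imI * I.imJ - y.imJ * I.imI), sq_nonneg (y.imI * I.imK - y.imK * I.imI),
      sq_nonneg (y.imJ * I.imK - y.imK * I.imJ), hns', sq_nonneg y.re]
  have hyn : Quaternion.normSq (x * star e) = Quaternion.normSq x := by
    rw [map_mul, Quaternion.normSq_star, ← norm_sq_quat e, he]; simp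
  have hx2 : x * star (I * e) = -(x * star e * I) := by
    rw [StarMul.star_mul, hstar, mul_neg, mul_neg, ← mul_assoc]
  have h1 : ‖Tmap e I x‖ ^ 2 ≤ ‖x‖ ^ 2 := by
    rw [Tmap_apply, Complex.sq_norm, norm_sq_quat, ← hyn, hx2]
    have h2 := key (x * star e)
    simp only [Complex.normSq_mk, Quaternion.re_neg]
    nlinarith [h2]
  nlinarith [norm_nonneg (Tmap e I x), norm_nonneg x, h1]

lemma Tmap_I_mul {e I : ℍ} (hre : I.re = 0) (hns : Quaternion.normSq I = 1) (w : ℍ) :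
    Tmap e I (I * w) = Complex.I * Tmap e I w := by
  have hstar : star I = -I := star_imunit hre
  have hII : I * I = -1 := imunit_mul_self hre hns
  have hse : star (I * e) = -(star e * I) := by rw [StarMul.star_mul, hstar, mul_neg]
  have e2 : ∀ v : ℍ, v * star (I * e) = -(v * star e * I) := by
    intro v; rw [hse, mul_neg, mul_assoc]
  apply Complex.ext
  · show (I * w * star e).re = (Complex.I * Tmap e I w).re
    rw [Complex.mul_re]
    simp only [Complex.I_re, Complex.I_im, Tmap_apply]
    rw [e2 w]
    calc (I * w * star e).re = ((w * star e) * I).re := by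
          rw [mul_assoc]; exact re_mul_comm _ _
      _ = 0 * (w * star e).re - 1 * (-(w * star e * I)).re := by
          simp only [Quaternion.re_neg]; ring
  · show (I * w * star (I * e)).re = (Complex.I * Tmap e I w).im
    rw [Complex.mul_im]
    simp only [Complex.I_re, Complex.I_im, Tmap_apply]
    rw [e2 w]
    calc (I * w * star (I * e)).re
        = -((I * (w * star e * I)).re) := by
          rw [e2 (I * w)]; rw [mul_assoc I w (star e)]; simp [Quaternion.re_neg, mul_assoc]
      _ = -(((w * star e * I) * I).re) := by rw [re_mul_comm]
      _ = (w * star e).re := by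
          rw [mul_assoc (w * star e), hII]; simp [Quaternion.re_neg]
      _ = 0 * (-(w * star e * I)).re + 1 * (w * star e).re := by ring

lemma Tmap_lift_mul {e I : ℍ} (hre : I.re = 0) (hns : Quaternion.normSq I = 1)
    (hII : I * I = -1) (z : ℂ) (w : ℍ) :
    Tmap e I (Complex.liftAux I hII z * w) = z * Tmap e I w := by
  rw [Complex.liftAux_apply]
  have h1 : (algebraMap ℝ ℍ z.re + z.im • I) * w = z.re • w + z.im • (I * w) := by
    simp only [add_mul, smul_mul_assoc, Algebra.smul_def, mul_assoc]
  rw [h1, map_add, map_smul, map_smul, Tmap_I_mul hre hns]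
  rw [Complex.real_smul, Complex.real_smul]
  conv_rhs => rw [← Complex.re_add_im z]
  ring

lemma norm_liftAux {I : ℍ} (hre : I.re = 0) (hns : Quaternion.normSq I = 1)
    (hII : I * I = -1) (z : ℂ) : ‖Complex.liftAux I hII z‖ = ‖z‖ := by
  have h1 : ‖Complex.liftAux I hII z‖ ^ 2 = ‖z‖ ^ 2 := by
    rw [norm_sq_quat, Complex.liftAux_apply, Complex.sq_norm,
      Complex.normSq_apply]
    rw [Quaternion.normSq_def'] at hns ⊢
    have hcoe : ∀ r : ℝ, (algebraMap ℝ ℍ r) = (r : ℍ) := fun r => rfl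
    simp only [hcoe, Quaternion.re_add, Quaternion.imI_add, Quaternion.imJ_add, Quaternion.imK_add,
      Quaternion.re_smul, Quaternion.imI_smul, Quaternion.imJ_smul, Quaternion.imK_smul,
      Quaternion.re_coe, Quaternion.imI_coe, Quaternion.imJ_coe,
      Quaternion.imK_coe, hre, smul_eq_mul, mul_zero, add_zero, zero_add]
    rw [hre] at hns
    nlinarith [hns, sq_nonneg z.im]
  nlinarith [norm_nonneg (Complex.liftAux I hII z), norm_nonneg z, h1]

lemma quat_schwarz (c : ℕ → ℍ)
    (hsum : ∀ ρ : ℝ, 0 ≤ ρ → ρ < 1 → Summable fun n : ℕ => ‖c n‖ * ρ ^ n)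
    (hc0 : c 0 = 0) {s M : ℝ} (hs0 : 0 < s) (hs1 : s < 1)
    (hM : ∀ w : ℍ, ‖w‖ ≤ s → ‖∑' n : ℕ, w ^ n * c n‖ ≤ M)
    {q : ℍ} (hq : ‖q‖ < s) :
    ‖∑' n : ℕ, q ^ n * c n‖ ≤ ‖q‖ / s * M := by
  have hS0 : (∑' n : ℕ, (0:ℍ) ^ n * c n) = 0 := by
    rw [tsum_eq_single 0]
    · simp [hc0]
    · intro b hb; simp [zero_pow hb]
  have hM0 : 0 ≤ M := by
    have h := hM 0 (by simpa using hs0.le)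
    rwa [hS0, norm_zero] at h
  by_cases hH0 : (∑' n : ℕ, q ^ n * c n) = 0
  · rw [hH0, norm_zero]; positivity
  have hq0 : q ≠ 0 := by rintro rfl; exact hH0 hS0
  obtain ⟨I, hre, hns, hqim⟩ :
      ∃ I : ℍ, I.re = 0 ∧ Quaternion.normSq I = 1 ∧ ‖q.im‖ • I = q.im := by
    by_cases him : q.im = 0
    · refine ⟨⟨0,1,0,0⟩, rfl, ?_, by rw [him, norm_zero]; exact zero_smul _ _⟩
      exact (Quaternion.normSq_def' _).trans (by norm_num)
    · have hnorm : ‖q.im‖ ≠ 0 := norm_ne_zero_iff.2 him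
      refine ⟨‖q.im‖⁻¹ • q.im, by simp [Quaternion.re_smul], ?_, ?_⟩
      · rw [← norm_sq_quat, norm_smul, Real.norm_eq_abs, abs_inv, abs_norm,
          inv_mul_cancel₀ hnorm]
        norm_num
      · rw [smul_smul, mul_inv_cancel₀ hnorm, one_smul]
  have hII : I * I = -1 := imunit_mul_self hre hns
  set A := Complex.liftAux I hII with hA
  have hAn : ∀ z : ℂ, ‖A z‖ = ‖z‖ := norm_liftAux hre hns hII
  set z₀ : ℂ := ⟨q.re, ‖q.im‖⟩ with hz₀def
  have hAz₀ : A z₀ = q := by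
    rw [hA, Complex.liftAux_apply]
    show (algebraMap ℝ ℍ q.re) + ‖q.im‖ • I = q
    have hcoe : (algebraMap ℝ ℍ q.re) = (q.re : ℍ) := rfl
    rw [hcoe, hqim, Quaternion.re_add_im]
  set H := ∑' n : ℕ, q ^ n * c n with hHdef
  have hHn : 0 < ‖H‖ := norm_pos_iff.2 hH0
  set e : ℍ := ‖H‖⁻¹ • H with hedef
  have he : ‖e‖ = 1 := by
    rw [hedef, norm_smul, Real.norm_eq_abs, abs_inv, abs_norm, inv_mul_cancel₀ hHn.ne']
  set T : ℍ →L[ℝ] ℂ := LinearMap.toContinuousLinearMap (Tmap e I) with hT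
  have hTapp : ∀ x : ℍ, T x = Tmap e I x := fun x => rfl
  have hTle : ∀ x : ℍ, ‖T x‖ ≤ ‖x‖ := fun x => by
    rw [hTapp]; exact Tmap_norm_le he hre hns x
  have hsum2 : ∀ w : ℍ, ‖w‖ ≤ s → Summable (fun n : ℕ => w ^ n * c n) := by
    intro w hw
    apply Summable.of_norm
    apply Summable.of_nonneg_of_le (fun n => norm_nonneg _) _ (hsum s hs0.le hs1)
    intro n
    rw [norm_mul, norm_pow, mul_comm]
    exact mul_le_mul_of_nonneg_left (pow_le_pow_left₀ (norm_nonneg _) hw n) (norm_nonneg _)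
  set d : ℕ → ℂ := fun n => T (c n) with hd
  have key : ∀ z : ℂ, ‖z‖ ≤ s →
      HasSum (fun n : ℕ => d n • z ^ n) (T (∑' n : ℕ, (A z) ^ n * c n)) := by
    intro z hz
    have h1 : HasSum (fun n : ℕ => (A z) ^ n * c n) (∑' n : ℕ, (A z) ^ n * c n) :=
      (hsum2 (A z) (by rw [hAn]; exact hz)).hasSum
    have h2 := h1.mapL T
    convert h2 using 2 with n
    rw [smul_eq_mul, mul_comm, ← map_pow]
    exact (Tmap_lift_mul hre hns hII (z ^ n) (c n)).symm
  set p := FormalMultilinearSeries.ofScalars ℂ d with hp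
  set s' : ℝ := (1 + s)/2 with hs'
  have hs'0 : 0 < s' := by rw [hs']; linarith
  have hss' : s < s' := by rw [hs']; linarith
  have hs'1 : s' < 1 := by rw [hs']; linarith
  have hdle : ∀ n, ‖d n‖ ≤ ‖c n‖ := fun n => by rw [hd]; exact hTle (c n)
  have hrad : ENNReal.ofReal s' ≤ p.radius := by
    have hsml : Summable (fun n : ℕ => ‖p n‖ * (s'.toNNReal : ℝ) ^ n) := by
      rw [Real.coe_toNNReal s' hs'0.le]
      apply Summable.of_nonneg_of_le _ _ (hsum s' hs'0.le hs'1)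
      · intro n; positivity
      · intro n
        apply mul_le_mul_of_nonneg_right _ (pow_nonneg hs'0.le n)
        rw [hp, FormalMultilinearSeries.ofScalars_norm]
        exact hdle n
    exact p.le_radius_of_summable hsml
  have hppos : (0:ENNReal) < p.radius :=
    lt_of_lt_of_le (by rw [ENNReal.ofReal_pos]; exact hs'0) hrad
  have hdiff : DifferentiableOn ℂ p.sum (Metric.ball (0:ℂ) s) := by
    apply (p.hasFPowerSeriesOnBall hppos).differentiableOn.mono
    intro z hz
    rw [Metric.mem_ball, dist_zero_right] at hz
    rw [EMetric.mem_ball, edist_zero_right, ← ofReal_norm]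
    exact lt_of_lt_of_le (ENNReal.ofReal_lt_ofReal_iff hs'0 |>.2 (hz.trans hss')) hrad
  have hpsum : ∀ z : ℂ, ‖z‖ ≤ s → p.sum z = T (∑' n : ℕ, (A z) ^ n * c n) := by
    intro z hz
    rw [← (key z hz).tsum_eq]
    exact tsum_congr fun n => FormalMultilinearSeries.ofScalars_apply_eq d z n
  have hpsum0 : p.sum 0 = 0 := by
    rw [hpsum 0 (by rw [norm_zero]; exact hs0.le), map_zero, hS0, map_zero]
  have hsch : ∀ ε : ℝ, 0 < ε → ‖H‖ ≤ (M + ε) / s * ‖q‖ := by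
    intro ε hε
    have hmaps : Set.MapsTo p.sum (Metric.ball (0:ℂ) s) (Metric.ball (p.sum 0) (M + ε)) := by
      intro z hz
      rw [Metric.mem_ball, dist_zero_right] at hz
      rw [hpsum0, Metric.mem_ball, dist_zero_right, hpsum z hz.le]
      calc ‖T (∑' n : ℕ, (A z) ^ n * c n)‖ ≤ ‖∑' n : ℕ, (A z) ^ n * c n‖ := hTle _
        _ ≤ M := hM (A z) (by rw [hAn]; exact hz.le)
        _ < M + ε := by linarith
    have hz₀ball : z₀ ∈ Metric.ball (0:ℂ) s := by
      rw [Metric.mem_ball, dist_zero_right, ← hAn z₀, hAz₀]; exact hq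
    have hsz := Complex.dist_le_div_mul_dist_of_mapsTo_ball hdiff (hmaps.mono_right Metric.ball_subset_closedBall) hz₀ball
    rw [hpsum0, dist_zero_right, dist_zero_right] at hsz
    have hψ : p.sum z₀ = T H := by
      rw [hpsum z₀ (by rw [← hAn z₀, hAz₀]; exact hq.le), hAz₀]
    have hstare : star e = ‖H‖⁻¹ • star H := by
      rw [hedef]; ext <;> simp
    have hreH : (T H).re = ‖H‖ := by
      rw [hTapp, Tmap_apply]
      show (H * star e).re = ‖H‖
      rw [hstare, mul_smul_comm, Quaternion.re_smul, ← Quaternion.normSq_def,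
        Quaternion.normSq_eq_norm_mul_self, smul_eq_mul]
      field_simp
    calc ‖H‖ = (T H).re := hreH.symm
      _ ≤ ‖T H‖ := Complex.re_le_norm _
      _ = ‖p.sum z₀‖ := by rw [hψ]
      _ ≤ (M + ε) / s * ‖z₀‖ := hsz
      _ = (M + ε) / s * ‖q‖ := by rw [← hAn z₀, hAz₀]
  have hqn : 0 < ‖q‖ := norm_pos_iff.2 hq0
  apply le_of_forall_pos_le_add
  intro δ hδ
  calc ‖H‖ ≤ (M + δ * s / ‖q‖) / s * ‖q‖ := hsch _ (by positivity)
    _ = ‖q‖ / s * M + δ := by field_simp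
/-- The regular composition `f_u(q) = ∑ q^n u^n a_n` of `f(q) = ∑ q^n a_n` with `q ↦ qu`. -/
def regComp (a : ℕ → ℍ) (u q : ℍ) : ℍ := ∑' n : ℕ, q ^ n * u ^ n * a n

/-- The regular diameter `d̃₂(f(r𝔹)) = max_{u,v ∈ 𝔹̄} max_{|q| ≤ r} |f_u(q) - f_v(q)|`. -/
def regDiam2 (a : ℕ → ℍ) (r : ℝ) : ℝ :=
  sSup {x : ℝ | ∃ u v q : ℍ, ‖u‖ ≤ 1 ∧ ‖v‖ ≤ 1 ∧ ‖q‖ ≤ r ∧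
    x = ‖regComp a u q - regComp a v q‖}

section helpers

variable {a : ℕ → ℍ}
  (hconv : ∀ ρ : ℝ, 0 ≤ ρ → ρ < 1 → Summable fun n : ℕ => ‖a n‖ * ρ ^ n)

lemma term_norm_le {u q : ℍ} {s : ℝ} (hu : ‖u‖ ≤ 1) (hq : ‖q‖ ≤ s) (n : ℕ) :
    ‖q ^ n * u ^ n * a n‖ ≤ ‖a n‖ * s ^ n := by
  have hs0 : 0 ≤ s := le_trans (norm_nonneg q) hq
  rw [norm_mul, norm_mul, norm_pow, norm_pow]
  have h1 : ‖q‖ ^ n ≤ s ^ n := pow_le_pow_left₀ (norm_nonneg q) hq n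
  have h2 : ‖u‖ ^ n ≤ 1 := pow_le_one₀ (norm_nonneg u) hu
  have h3 : ‖q‖ ^ n * ‖u‖ ^ n ≤ s ^ n * 1 :=
    mul_le_mul h1 h2 (pow_nonneg (norm_nonneg u) n) (pow_nonneg hs0 n)
  calc ‖q‖ ^ n * ‖u‖ ^ n * ‖a n‖ ≤ s ^ n * 1 * ‖a n‖ :=
        mul_le_mul_of_nonneg_right h3 (norm_nonneg _)
    _ = ‖a n‖ * s ^ n := by ring

include hconv in
lemma summable_regComp_term {u q : ℍ} {s : ℝ} (hu : ‖u‖ ≤ 1) (hq : ‖q‖ ≤ s)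
    (hs0 : 0 ≤ s) (hs1 : s < 1) : Summable (fun n : ℕ => q ^ n * u ^ n * a n) := by
  apply Summable.of_norm
  exact Summable.of_nonneg_of_le (fun n => norm_nonneg _) (term_norm_le hu hq)
    (hconv s hs0 hs1)

include hconv in
lemma norm_regComp_le {u q : ℍ} {s : ℝ} (hu : ‖u‖ ≤ 1) (hq : ‖q‖ ≤ s)
    (hs0 : 0 ≤ s) (hs1 : s < 1) : ‖regComp a u q‖ ≤ ∑' n : ℕ, ‖a n‖ * s ^ n := by
  rw [regComp]
  refine le_trans (norm_tsum_le_tsum_norm ?_) ?_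
  · exact Summable.of_nonneg_of_le (fun n => norm_nonneg _) (term_norm_le hu hq)
      (hconv s hs0 hs1)
  · exact Summable.tsum_le_tsum (term_norm_le hu hq)
      (Summable.of_nonneg_of_le (fun n => norm_nonneg _) (term_norm_le hu hq)
        (hconv s hs0 hs1)) (hconv s hs0 hs1)

include hconv in
lemma bddAbove_regSet {s : ℝ} (hs0 : 0 ≤ s) (hs1 : s < 1) :
    BddAbove {x : ℝ | ∃ u v q : ℍ, ‖u‖ ≤ 1 ∧ ‖v‖ ≤ 1 ∧ ‖q‖ ≤ s ∧
      x = ‖regComp a u q - regComp a v q‖} := by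
  refine ⟨2 * ∑' n : ℕ, ‖a n‖ * s ^ n, ?_⟩
  rintro x ⟨u, v, q, hu, hv, hq, rfl⟩
  calc ‖regComp a u q - regComp a v q‖ ≤ ‖regComp a u q‖ + ‖regComp a v q‖ := norm_sub_le _ _
    _ ≤ (∑' n : ℕ, ‖a n‖ * s ^ n) + ∑' n : ℕ, ‖a n‖ * s ^ n :=
        add_le_add (norm_regComp_le hconv hu hq hs0 hs1) (norm_regComp_le hconv hv hq hs0 hs1)
    _ = 2 * ∑' n : ℕ, ‖a n‖ * s ^ n := by ring

include hconv in
lemma regDiam2_nonneg {s : ℝ} (hs0 : 0 ≤ s) (hs1 : s < 1) : 0 ≤ regDiam2 a s := by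
  apply le_csSup (bddAbove_regSet hconv hs0 hs1)
  exact ⟨0, 0, 0, by simp, by simp, by simp [hs0], by simp⟩

include hconv in
lemma regComp_sub_eq {u v q : ℍ} (hu : ‖u‖ ≤ 1) (hv : ‖v‖ ≤ 1) (hq : ‖q‖ < 1) :
    regComp a u q - regComp a v q = ∑' n : ℕ, q ^ n * (u ^ n * a n - v ^ n * a n) := by
  rw [regComp, regComp,
    ← Summable.tsum_sub (summable_regComp_term hconv hu le_rfl (norm_nonneg q) hq)
      (summable_regComp_term hconv hv le_rfl (norm_nonneg q) hq)]
  exact tsum_congr fun n => by rw [mul_sub, ← mul_assoc, ← mul_assoc]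

include hconv in
lemma csum_summable {u v : ℍ} (hu : ‖u‖ ≤ 1) (hv : ‖v‖ ≤ 1) :
    ∀ ρ : ℝ, 0 ≤ ρ → ρ < 1 →
      Summable fun n : ℕ => ‖u ^ n * a n - v ^ n * a n‖ * ρ ^ n := by
  intro ρ h0 h1
  refine Summable.of_nonneg_of_le (fun n => by positivity) (fun n => ?_)
    ((hconv ρ h0 h1).mul_left 2)
  have h2 : ‖u ^ n * a n - v ^ n * a n‖ ≤ 2 * ‖a n‖ := by
    calc ‖u ^ n * a n - v ^ n * a n‖ ≤ ‖u ^ n * a n‖ + ‖v ^ n * a n‖ := norm_sub_le _ _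
      _ ≤ 1 * ‖a n‖ + 1 * ‖a n‖ := by
          rw [norm_mul, norm_mul]
          gcongr <;> simpa [norm_pow] using
            pow_le_one₀ (norm_nonneg _) (by assumption)
      _ = 2 * ‖a n‖ := by ring
  calc ‖u ^ n * a n - v ^ n * a n‖ * ρ ^ n ≤ 2 * ‖a n‖ * ρ ^ n :=
        mul_le_mul_of_nonneg_right h2 (pow_nonneg h0 n)
    _ = 2 * (‖a n‖ * ρ ^ n) := by ring

end helpers

set_option maxHeartbeats 1000000 in
/-- Landau–Toeplitz theorem for slice regular functions, inequality part. -/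
theorem landau_toeplitz_ineq (a : ℕ → ℍ)
    (hconv : ∀ ρ : ℝ, 0 ≤ ρ → ρ < 1 → Summable fun n : ℕ => ‖a n‖ * ρ ^ n)
    (hd2 : Tendsto (regDiam2 a) (nhdsWithin 1 (Set.Iio 1)) (nhds 2)) :
    (∀ r ∈ Set.Ioo (0 : ℝ) 1, regDiam2 a r ≤ 2 * r) ∧ ‖a 1‖ ≤ 1 := by
  have part1 : ∀ r ∈ Set.Ioo (0 : ℝ) 1, regDiam2 a r ≤ 2 * r := by
    rintro r ⟨hr0, hr1⟩
    rw [regDiam2]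
    apply Real.sSup_le _ (by linarith)
    rintro x ⟨u, v, q, hu, hv, hq, rfl⟩
    set c : ℕ → ℍ := fun n => u ^ n * a n - v ^ n * a n with hc
    have hcsum := csum_summable hconv hu hv
    have hc0 : c 0 = 0 := by simp [hc]
    have hxle : ∀ s : ℝ, r < s → s < 1 →
        ‖regComp a u q - regComp a v q‖ ≤ r / s * regDiam2 a s := by
      intro s hrs hs1
      have hs0 : (0:ℝ) < s := lt_trans hr0 hrs
      have hqs : ‖q‖ < s := lt_of_le_of_lt hq hrs
      have hM : ∀ w : ℍ, ‖w‖ ≤ s → ‖∑' n : ℕ, w ^ n * c n‖ ≤ regDiam2 a s := by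
        intro w hw
        rw [← regComp_sub_eq hconv hu hv (lt_of_le_of_lt hw hs1)]
        exact le_csSup (bddAbove_regSet hconv hs0.le hs1) ⟨u, v, w, hu, hv, hw, rfl⟩
      have hschw := quat_schwarz c hcsum hc0 hs0 hs1 hM hqs
      rw [regComp_sub_eq hconv hu hv (lt_trans hqs hs1)]
      refine le_trans hschw ?_
      have hd2nn : 0 ≤ regDiam2 a s := regDiam2_nonneg hconv hs0.le hs1
      apply mul_le_mul_of_nonneg_right _ hd2nn
      gcongr
    have htends : Tendsto (fun s : ℝ => r / s * regDiam2 a s)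
        (nhdsWithin 1 (Set.Iio 1)) (nhds (2 * r)) := by
      have h1 : Tendsto (fun s : ℝ => r / s) (nhdsWithin 1 (Set.Iio 1)) (nhds r) := by
        have h2 : Tendsto (fun s : ℝ => r / s) (nhds 1) (nhds (r / 1)) :=
          (tendsto_const_nhds ).div tendsto_id one_ne_zero
        rw [div_one] at h2
        exact h2.mono_left nhdsWithin_le_nhds
      have h3 := h1.mul hd2
      have : r * 2 = 2 * r := by ring
      rwa [this] at h3
    apply ge_of_tendsto htends
    filter_upwards [Ioo_mem_nhdsLT_of_mem (show (1:ℝ) ∈ Set.Ioc r 1 from ⟨hr1, le_refl 1⟩)]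
      with s hs
    exact hxle s hs.1 hs.2
  refine ⟨part1, ?_⟩
  set c : ℕ → ℍ := fun n => (1:ℍ) ^ n * a n - (-1:ℍ) ^ n * a n with hc
  have hu1 : ‖(1:ℍ)‖ ≤ 1 := by simp
  have hv1 : ‖(-1:ℍ)‖ ≤ 1 := by simp
  have hcsum := csum_summable hconv hu1 hv1
  have hc1 : c 1 = (2:ℝ) • a 1 := by
    rw [hc]
    simp only [pow_one, one_mul, neg_one_mul, sub_neg_eq_add]
    exact (two_smul ℝ (a 1)).symm
  have hc1norm : ‖c 1‖ = 2 * ‖a 1‖ := by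
    rw [hc1, norm_smul, Real.norm_eq_abs]; norm_num
  have hc0 : c 0 = 0 := by simp [hc]
  have hbound : ∀ t : ℝ, 0 < t → t < 1 → ‖∑' n : ℕ, ((t:ℝ) : ℍ) ^ n * c n‖ ≤ 2 * t := by
    intro t ht0 ht1
    have hqt : ‖((t:ℝ) : ℍ)‖ ≤ t := by
      rw [Quaternion.norm_coe, Real.norm_eq_abs, abs_of_pos ht0]
    rw [← regComp_sub_eq hconv hu1 hv1 (lt_of_le_of_lt hqt ht1)]
    refine le_trans (le_csSup (bddAbove_regSet hconv ht0.le ht1)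
      ⟨1, -1, _, hu1, hv1, hqt, rfl⟩) (part1 t ⟨ht0, ht1⟩)
  set C : ℝ := ∑' n : ℕ, ‖c (n + 2)‖ * (1/2 : ℝ) ^ n with hCdef
  have hCsum : Summable (fun n : ℕ => ‖c (n + 2)‖ * (1/2 : ℝ) ^ n) := by
    have h4 := (summable_nat_add_iff 2).2 (hcsum (1/2) (by norm_num) (by norm_num))
    have heq : (fun n : ℕ => ‖c (n + 2)‖ * (1/2 : ℝ) ^ n)
        = fun n : ℕ => (‖c (n + 2)‖ * (1/2 : ℝ) ^ (n + 2)) * 4 := by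
      funext n; rw [pow_add]; ring
    rw [heq]; exact h4.mul_right 4
  have hkey : ∀ t : ℝ, 0 < t → t ≤ 1/2 → 2 * t * ‖a 1‖ ≤ 2 * t + C * t ^ 2 := by
    intro t ht0 ht2
    have ht1 : t < 1 := by linarith
    have hqt : ‖((t:ℝ) : ℍ)‖ ≤ t := by
      rw [Quaternion.norm_coe, Real.norm_eq_abs, abs_of_pos ht0]
    have htermle : ∀ n : ℕ, ‖((t:ℝ) : ℍ) ^ n * c n‖ ≤ ‖c n‖ * t ^ n := by
      intro n
      rw [norm_mul, norm_pow, mul_comm]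
      exact mul_le_mul_of_nonneg_left (pow_le_pow_left₀ (norm_nonneg _) hqt n) (norm_nonneg _)
    have hnorm : Summable (fun n : ℕ => ‖((t:ℝ) : ℍ) ^ n * c n‖) :=
      Summable.of_nonneg_of_le (fun n => norm_nonneg _) htermle (hcsum t ht0.le ht1)
    have hsumt : Summable (fun n : ℕ => ((t:ℝ) : ℍ) ^ n * c n) := Summable.of_norm hnorm
    have hf0 : ((t:ℝ) : ℍ) ^ 0 * c 0 = 0 := by rw [hc0]; simp
    have hmain : ((t:ℝ) : ℍ) * c 1 = (∑' n : ℕ, ((t:ℝ) : ℍ) ^ n * c n)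
        - ∑' n : ℕ, ((t:ℝ) : ℍ) ^ (n + 2) * c (n + 2) := by
      have hadd := Summable.sum_add_tsum_nat_add 2 hsumt
      rw [Finset.sum_range_succ, Finset.sum_range_one, hf0, pow_one, zero_add] at hadd
      exact eq_sub_of_add_eq hadd
    have htail : ‖∑' n : ℕ, ((t:ℝ) : ℍ) ^ (n + 2) * c (n + 2)‖ ≤ C * t ^ 2 := by
      have hnorm2 : Summable (fun n : ℕ => ‖((t:ℝ) : ℍ) ^ (n + 2) * c (n + 2)‖) :=
        (summable_nat_add_iff 2).2 hnorm
      refine le_trans (norm_tsum_le_tsum_norm hnorm2) ?_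
      have hterm2 : ∀ n : ℕ, ‖((t:ℝ) : ℍ) ^ (n + 2) * c (n + 2)‖
          ≤ (‖c (n + 2)‖ * (1/2 : ℝ) ^ n) * t ^ 2 := by
        intro n
        have h6 : t ^ (n + 2) ≤ (1/2:ℝ) ^ n * t ^ 2 := by
          rw [pow_add]
          exact mul_le_mul_of_nonneg_right (pow_le_pow_left₀ ht0.le ht2 n) (sq_nonneg t)
        calc ‖((t:ℝ) : ℍ) ^ (n + 2) * c (n + 2)‖ ≤ ‖c (n + 2)‖ * t ^ (n + 2) := htermle (n + 2)
          _ ≤ ‖c (n + 2)‖ * ((1/2:ℝ) ^ n * t ^ 2) :=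
              mul_le_mul_of_nonneg_left h6 (norm_nonneg _)
          _ = (‖c (n + 2)‖ * (1/2 : ℝ) ^ n) * t ^ 2 := by ring
      refine le_trans (Summable.tsum_le_tsum hterm2 hnorm2 (hCsum.mul_right (t ^ 2))) ?_
      rw [tsum_mul_right]
    calc 2 * t * ‖a 1‖ = ‖((t:ℝ) : ℍ) * c 1‖ := by
          rw [norm_mul, Quaternion.norm_coe, Real.norm_eq_abs, abs_of_pos ht0, hc1norm]; ring
      _ ≤ ‖∑' n : ℕ, ((t:ℝ) : ℍ) ^ n * c n‖
          + ‖∑' n : ℕ, ((t:ℝ) : ℍ) ^ (n + 2) * c (n + 2)‖ := by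
          rw [hmain]; exact norm_sub_le _ _
      _ ≤ 2 * t + C * t ^ 2 := add_le_add (hbound t ht0 ht1) htail
  have hfin : ∀ t : ℝ, 0 < t → t ≤ 1/2 → ‖a 1‖ ≤ 1 + C / 2 * t := by
    intro t ht0 ht2
    nlinarith [hkey t ht0 ht2, ht0]
  have ht : Tendsto (fun t : ℝ => 1 + C / 2 * t) (nhdsWithin 0 (Set.Ioi 0)) (nhds 1) := by
    have h5 : Tendsto (fun t : ℝ => 1 + C / 2 * t) (nhds 0) (nhds (1 + C / 2 * 0)) :=
      tendsto_const_nhds.add (tendsto_id.const_mul (C / 2))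
    rw [mul_zero, add_zero] at h5
    exact h5.mono_left nhdsWithin_le_nhds
  apply ge_of_tendsto ht
  filter_upwards [Ioc_mem_nhdsGT_of_mem
    (show (0:ℝ) ∈ Set.Ico (0:ℝ) (1/2) from ⟨le_refl 0, by norm_num⟩)] with t ht'
  exact hfin t ht'.1 ht'.2
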